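/- Let S = {m ∈ ℕ : every digit of the base-3 expansion of m is 0 or 1}. Then S contains no 3-term arithmetic progression, and for every t ≥ 0 the number of elements of S that are less than 3^t equals 2^t. -/

import Mathlib

private lemma good_iff (m : ℕ) :
    (∀ d ∈ Nat.digits 3 m, d = 0 ∨ d = 1) ↔
      (m % 3 = 0 ∨ m % 3 = 1) ∧ (∀ d ∈ Nat.digits 3 (m / 3), d = 0 ∨ d = 1) := by
  rcases eq_or_ne m 0 with rfl | h
  · simp
  · rw [Nat.digits_def' (by norm_num : 1 < 3) (Nat.pos_of_ne_zero h)]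
    simp [List.forall_mem_cons]

private lemma ap_aux : ∀ b a c : ℕ, (∀ d ∈ Nat.digits 3 a, d = 0 ∨ d = 1) →
    (∀ d ∈ Nat.digits 3 b, d = 0 ∨ d = 1) → (∀ d ∈ Nat.digits 3 c, d = 0 ∨ d = 1) →
    a + c = 2 * b → a = c := by
  intro b
  induction b using Nat.strong_induction_on with
  | _ b ih =>
    intro a c ha hb hc habc
    rcases eq_or_ne b 0 with rfl | hb0
    · omega
    · obtain ⟨ha1, ha2⟩ := (good_iff a).1 ha
      obtain ⟨hb1, hb2⟩ := (good_iff b).1 hb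
      obtain ⟨hc1, hc2⟩ := (good_iff c).1 hc
      have h1 : a / 3 + c / 3 = 2 * (b / 3) := by omega
      have := ih (b / 3) (by omega) (a / 3) (c / 3) ha2 hb2 hc2 h1
      omega

private lemma card_step (t : ℕ) :
    ((Finset.range (3 ^ (t + 1))).filter (fun m => ∀ d ∈ Nat.digits 3 m, d = 0 ∨ d = 1)).card =
      2 * ((Finset.range (3 ^ t)).filter (fun m => ∀ d ∈ Nat.digits 3 m, d = 0 ∨ d = 1)).card := by
  have key :
      ((Finset.range (3 ^ (t + 1))).filter (fun m => ∀ d ∈ Nat.digits 3 m, d = 0 ∨ d = 1)).card =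
        ((Finset.range 2) ×ˢ
          ((Finset.range (3 ^ t)).filter (fun m => ∀ d ∈ Nat.digits 3 m, d = 0 ∨ d = 1))).card := by
    refine Finset.card_bij' (fun m _ => (m % 3, m / 3)) (fun p _ => 3 * p.2 + p.1) ?hi ?hj ?li ?ri
    case hi =>
      intro m hm
      simp only [Finset.mem_filter, Finset.mem_range] at hm
      obtain ⟨hlt, hgood⟩ := hm
      obtain ⟨h1, h2⟩ := (good_iff m).1 hgood
      simp only [Finset.mem_product, Finset.mem_filter, Finset.mem_range]
      refine ⟨by omega, ?_, h2⟩
      have : 3 ^ (t + 1) = 3 * 3 ^ t := by ring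
      omega
    case hj =>
      intro p hp
      simp only [Finset.mem_product, Finset.mem_filter, Finset.mem_range] at hp
      obtain ⟨hr, hq, hgood⟩ := hp
      simp only [Finset.mem_filter, Finset.mem_range]
      constructor
      · have : 3 ^ (t + 1) = 3 * 3 ^ t := by ring
        omega
      · rw [good_iff]
        constructor
        · omega
        · have h1 : (3 * p.2 + p.1) / 3 = p.2 := by omega
          rw [h1]; exact hgood
    case li =>
      intro m hm
      simp only []
      omega
    case ri =>
      intro p hp
      simp only [Finset.mem_product, Finset.mem_range] at hp
      have h1 : (3 * p.2 + p.1) % 3 = p.1 := by omega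
      have h2 : (3 * p.2 + p.1) / 3 = p.2 := by omega
      rw [h1, h2]
  rw [key, Finset.card_product, Finset.card_range]

/-- Let `S = {m ∈ ℕ : every digit of the base-3 expansion of m is 0 or 1}`. Then `S`
contains no 3-term arithmetic progression, and for every `t ≥ 0` the number of elements
of `S` that are less than `3^t` equals `2^t`. -/
theorem stmt_14 :
    (¬ ∃ a ∈ {m : ℕ | ∀ d ∈ Nat.digits 3 m, d = 0 ∨ d = 1},
        ∃ b ∈ {m : ℕ | ∀ d ∈ Nat.digits 3 m, d = 0 ∨ d = 1},
          ∃ c ∈ {m : ℕ | ∀ d ∈ Nat.digits 3 m, d = 0 ∨ d = 1},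
            a ≠ b ∧ a ≠ c ∧ b ≠ c ∧ a + c = 2 * b) ∧
      ∀ t : ℕ,
        ((Finset.range (3 ^ t)).filter (fun m => ∀ d ∈ Nat.digits 3 m, d = 0 ∨ d = 1)).card =
          2 ^ t := by
  constructor
  · rintro ⟨a, ha, b, hb, c, hc, hab, hac, hbc, habc⟩
    exact hac (ap_aux b a c ha hb hc habc)
  · intro t
    induction t with
    | zero =>
      norm_num [Finset.range_one, Finset.filter_singleton]
    | succ t ih => rw [card_step, ih]; ring
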